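/- For every N ≥ 1, the state ψ : Fin 2 × Fin N × Fin (N+1) → ℂ defined by ψ(0, b, castSucc b) = √((N − b)/(N(N+1))) and ψ(1, b, succ b) = √((b + 1)/(N(N+1))) for each b : Fin N (here castSucc b and succ b are the images of b and b+1 in Fin (N+1)), and ψ = 0 on all other triples, is a normalized locally maximally entangled state for dimensions (2, N, N+1). -/

import Mathlib

open scoped ComplexConjugate

noncomputable section

def rho1 {A B C : ℕ} (ψ : Fin A × Fin B × Fin C → ℂ) : Matrix (Fin A) (Fin A) ℂ :=
  Matrix.of fun a a' => ∑ b, ∑ c, ψ (a, b, c) * conj (ψ (a', b, c))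

def rho2 {A B C : ℕ} (ψ : Fin A × Fin B × Fin C → ℂ) : Matrix (Fin B) (Fin B) ℂ :=
  Matrix.of fun b b' => ∑ a, ∑ c, ψ (a, b, c) * conj (ψ (a, b', c))

def rho3 {A B C : ℕ} (ψ : Fin A × Fin B × Fin C → ℂ) : Matrix (Fin C) (Fin C) ℂ :=
  Matrix.of fun c c' => ∑ a, ∑ b, ψ (a, b, c) * conj (ψ (a, b, c'))

def TriNormalized {A B C : ℕ} (ψ : Fin A × Fin B × Fin C → ℂ) : Prop :=
  ∑ x, ‖ψ x‖ ^ 2 = 1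

def TriIsLME {A B C : ℕ} (ψ : Fin A × Fin B × Fin C → ℂ) : Prop :=
  TriNormalized ψ ∧ rho1 ψ = (1 / (A : ℂ)) • 1 ∧
    rho2 ψ = (1 / (B : ℂ)) • 1 ∧ rho3 ψ = (1 / (C : ℂ)) • 1

def TriLMEExists (A B C : ℕ) : Prop := ∃ ψ : Fin A × Fin B × Fin C → ℂ, TriIsLME ψ

namespace LME5

def D (N : ℕ) : ℝ := (N : ℝ) * ((N : ℝ) + 1)

def ψ (N : ℕ) : Fin 2 × Fin N × Fin (N+1) → ℂ := fun x =>
  if x.1 = 0 ∧ x.2.2 = Fin.castSucc x.2.1 then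
    ((Real.sqrt ((((N : ℝ) - ((x.2.1 : ℕ) : ℝ))) / ((N : ℝ) * ((N : ℝ) + 1))) : ℝ) : ℂ)
  else if x.1 = 1 ∧ x.2.2 = Fin.succ x.2.1 then
    ((Real.sqrt ((((x.2.1 : ℕ) : ℝ) + 1) / ((N : ℝ) * ((N : ℝ) + 1))) : ℝ) : ℂ)
  else 0

def u0 (N : ℕ) (b : Fin N) : ℝ := Real.sqrt (((N : ℝ) - (b : ℕ)) / D N)
def u1 (N : ℕ) (b : Fin N) : ℝ := Real.sqrt ((((b : ℕ) : ℝ) + 1) / D N)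

lemma psi0 (N : ℕ) (b : Fin N) (c : Fin (N+1)) :
    ψ N (0, b, c) = if c = Fin.castSucc b then ((u0 N b : ℝ) : ℂ) else 0 := by
  simp only [ψ, u0, D]
  by_cases h : c = Fin.castSucc b <;> simp [h]

lemma psi1 (N : ℕ) (b : Fin N) (c : Fin (N+1)) :
    ψ N (1, b, c) = if c = Fin.succ b then ((u1 N b : ℝ) : ℂ) else 0 := by
  simp only [ψ, u1, D]
  by_cases h : c = Fin.succ b <;> simp [h]

lemma arg0_nonneg (N : ℕ) (b : Fin N) : 0 ≤ ((N : ℝ) - (b : ℕ)) / D N := by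
  apply div_nonneg
  · have := b.isLt
    have : ((b : ℕ) : ℝ) < (N : ℝ) := by exact_mod_cast this
    linarith
  · unfold D; positivity

lemma arg1_nonneg (N : ℕ) (b : Fin N) : 0 ≤ (((b : ℕ) : ℝ) + 1) / D N := by
  apply div_nonneg
  · positivity
  · unfold D; positivity

lemma u0_sq (N : ℕ) (b : Fin N) : u0 N b * u0 N b = ((N : ℝ) - (b : ℕ)) / D N :=
  Real.mul_self_sqrt (arg0_nonneg N b)

lemma u1_sq (N : ℕ) (b : Fin N) : u1 N b * u1 N b = (((b : ℕ) : ℝ) + 1) / D N :=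
  Real.mul_self_sqrt (arg1_nonneg N b)

lemma sum_c_mul {N : ℕ} (x y : Fin (N+1)) (u w : ℂ) :
    ∑ c : Fin (N+1), (if c = x then u else 0) * conj (if c = y then w else 0)
      = if x = y then u * conj w else 0 := by
  have key : ∀ c : Fin (N+1), (if c = x then u else 0) * conj (if c = y then w else 0)
      = if c = x then (if x = y then u * conj w else 0) else 0 := by
    intro c
    by_cases h1 : c = x
    · subst h1
      by_cases h2 : c = y
      · subst h2; simp
      · simp [h2]
    · simp [h1]
  rw [Finset.sum_congr rfl (fun c _ => key c), Finset.sum_ite_eq' Finset.univ x,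
    if_pos (Finset.mem_univ x)]

lemma sum_c_norm {N : ℕ} (x : Fin (N+1)) (u : ℂ) :
    ∑ c : Fin (N+1), ‖if c = x then u else 0‖ ^ 2 = ‖u‖ ^ 2 := by
  have key : ∀ c : Fin (N+1), ‖if c = x then u else 0‖ ^ 2 = if c = x then ‖u‖^2 else 0 := by
    intro c; split <;> simp
  rw [Finset.sum_congr rfl (fun c _ => key c), Finset.sum_ite_eq' Finset.univ x,
    if_pos (Finset.mem_univ x)]

lemma sum_b_castSucc {N : ℕ} (c : Fin (N+1)) (g : Fin N → ℂ) :
    ∑ b : Fin N, (if c = Fin.castSucc b then g b else 0)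
      = if h : (c : ℕ) < N then g ⟨(c : ℕ), h⟩ else 0 := by
  by_cases h : (c : ℕ) < N
  · rw [dif_pos h, Finset.sum_eq_single ⟨(c : ℕ), h⟩]
    · rw [if_pos]; exact Fin.ext (by simp)
    · intro b _ hb
      rw [if_neg]
      intro hc
      exact hb (Fin.ext (by simpa using (congrArg Fin.val hc).symm))
    · simp
  · rw [dif_neg h]
    apply Finset.sum_eq_zero
    intro b _
    rw [if_neg]
    intro hc
    exact h (by simpa [hc] using b.isLt)

lemma sum_b_succ {N : ℕ} (c : Fin (N+1)) (g : Fin N → ℂ) :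
    ∑ b : Fin N, (if c = Fin.succ b then g b else 0)
      = if h : (c : ℕ) ≠ 0 then g ⟨(c : ℕ) - 1, by have := c.isLt; omega⟩ else 0 := by
  by_cases h : (c : ℕ) ≠ 0
  · rw [dif_pos h, Finset.sum_eq_single (⟨(c : ℕ) - 1, by have := c.isLt; omega⟩ : Fin N)]
    · rw [if_pos]; exact Fin.ext (by simp only [Fin.val_succ, Fin.val_mk]; omega)
    · intro b _ hb
      rw [if_neg]
      intro hc
      apply hb
      apply Fin.ext
      have := congrArg Fin.val hc
      simp [Fin.val_succ] at this
      simp only [Fin.val_mk]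
      omega
    · simp
  · rw [dif_neg h]
    apply Finset.sum_eq_zero
    intro b _
    rw [if_neg]
    intro hc
    have := congrArg Fin.val hc
    simp [Fin.val_succ] at this
    omega

lemma gauss (N : ℕ) (hN : 1 ≤ N) :
    (∑ b : Fin N, ((b : ℕ) : ℝ)) * 2 = (N : ℝ) * ((N : ℝ) - 1) := by
  have hn : (∑ b : Fin N, (b : ℕ)) * 2 = N * (N - 1) := by
    rw [Fin.sum_univ_eq_sum_range (fun i => i) N]
    exact Finset.sum_range_id_mul_two N
  have := congrArg (Nat.cast : ℕ → ℝ) hn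
  push_cast [Nat.cast_sub hN] at this
  linarith

lemma sumA (N : ℕ) (hN : 1 ≤ N) : ∑ b : Fin N, ((N : ℝ) - (b : ℕ)) / D N = 1 / 2 := by
  have hg := gauss N hN
  have hN0 : (0 : ℝ) < (N : ℝ) := by exact_mod_cast hN
  rw [← Finset.sum_div, Finset.sum_sub_distrib, Finset.sum_const, Finset.card_univ,
    Fintype.card_fin, nsmul_eq_mul]
  unfold D
  field_simp
  nlinarith [hg]

lemma sumB (N : ℕ) (hN : 1 ≤ N) : ∑ b : Fin N, (((b : ℕ) : ℝ) + 1) / D N = 1 / 2 := by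
  have hg := gauss N hN
  have hN0 : (0 : ℝ) < (N : ℝ) := by exact_mod_cast hN
  rw [← Finset.sum_div, Finset.sum_add_distrib, Finset.sum_const, Finset.card_univ,
    Fintype.card_fin, nsmul_eq_mul]
  unfold D
  field_simp
  nlinarith [hg]

end LME5

/-- the explicit LME state for dimensions (2, N, N+1). -/
theorem lme_two_N_Nsucc (N : ℕ) (hN : 1 ≤ N) :
    TriIsLME (A := 2) (B := N) (C := N + 1)
      (fun x =>
        if x.1 = 0 ∧ x.2.2 = Fin.castSucc x.2.1 then
          ((Real.sqrt ((((N : ℝ) - ((x.2.1 : ℕ) : ℝ))) / ((N : ℝ) * ((N : ℝ) + 1))) : ℝ) : ℂ)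
        else if x.1 = 1 ∧ x.2.2 = Fin.succ x.2.1 then
          ((Real.sqrt ((((x.2.1 : ℕ) : ℝ) + 1) / ((N : ℝ) * ((N : ℝ) + 1))) : ℝ) : ℂ)
        else 0) := by
  show TriIsLME (LME5.ψ N)
  have hNR : (0:ℝ) < (N:ℝ) := by exact_mod_cast hN
  have hD0 : LME5.D N ≠ 0 := by unfold LME5.D; positivity
  have E00 : ∀ b : Fin N, ∑ c, LME5.ψ N (0,b,c) * conj (LME5.ψ N (0,b,c))
      = ((((N:ℝ) - (b:ℕ)) / LME5.D N : ℝ) : ℂ) := by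
    intro b
    simp only [LME5.psi0]
    rw [LME5.sum_c_mul, if_pos rfl, Complex.conj_ofReal, ← Complex.ofReal_mul, LME5.u0_sq]
  have E11 : ∀ b : Fin N, ∑ c, LME5.ψ N (1,b,c) * conj (LME5.ψ N (1,b,c))
      = (((((b:ℕ):ℝ) + 1) / LME5.D N : ℝ) : ℂ) := by
    intro b
    simp only [LME5.psi1]
    rw [LME5.sum_c_mul, if_pos rfl, Complex.conj_ofReal, ← Complex.ofReal_mul, LME5.u1_sq]
  refine ⟨?_, ?_, ?_, ?_⟩
  · -- normalization
    unfold TriNormalized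
    simp only [Fintype.sum_prod_type]
    rw [Fin.sum_univ_two]
    have e0 : ∀ b : Fin N, (∑ c, ‖LME5.ψ N (0, b, c)‖ ^ 2) = ((N:ℝ) - (b:ℕ)) / LME5.D N := by
      intro b
      simp only [LME5.psi0]
      rw [LME5.sum_c_norm, Complex.norm_real, Real.norm_eq_abs, sq_abs]
      simp only [LME5.u0]
      rw [Real.sq_sqrt (LME5.arg0_nonneg N b)]
    have e1 : ∀ b : Fin N, (∑ c, ‖LME5.ψ N (1, b, c)‖ ^ 2) = (((b:ℕ):ℝ) + 1) / LME5.D N := by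
      intro b
      simp only [LME5.psi1]
      rw [LME5.sum_c_norm, Complex.norm_real, Real.norm_eq_abs, sq_abs]
      simp only [LME5.u1]
      rw [Real.sq_sqrt (LME5.arg1_nonneg N b)]
    rw [Finset.sum_congr rfl fun b _ => e0 b, Finset.sum_congr rfl fun b _ => e1 b,
      LME5.sumA N hN, LME5.sumB N hN]
    norm_num
  · -- rho1
    have E01 : ∀ b : Fin N, ∑ c, LME5.ψ N (0,b,c) * conj (LME5.ψ N (1,b,c)) = 0 := by
      intro b
      simp only [LME5.psi0, LME5.psi1]
      rw [LME5.sum_c_mul, if_neg (Fin.castSucc_lt_succ : Fin.castSucc b < Fin.succ b).ne]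
    have E10 : ∀ b : Fin N, ∑ c, LME5.ψ N (1,b,c) * conj (LME5.ψ N (0,b,c)) = 0 := by
      intro b
      simp only [LME5.psi0, LME5.psi1]
      rw [LME5.sum_c_mul, if_neg (Fin.castSucc_lt_succ : Fin.castSucc b < Fin.succ b).ne']
    ext a a'
    simp only [rho1, Matrix.of_apply, Matrix.smul_apply, Matrix.one_apply, smul_eq_mul]
    fin_cases a <;> fin_cases a'
    · show ∑ b : Fin N, ∑ c, LME5.ψ N (0,b,c) * conj (LME5.ψ N (0,b,c))
        = 1 / ((2:ℕ):ℂ) * if (0 : Fin 2) = 0 then 1 else 0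
      rw [Finset.sum_congr rfl fun b _ => E00 b, ← Complex.ofReal_sum, LME5.sumA N hN]
      norm_num
    · show ∑ b : Fin N, ∑ c, LME5.ψ N (0,b,c) * conj (LME5.ψ N (1,b,c))
        = 1 / ((2:ℕ):ℂ) * if (0 : Fin 2) = 1 then 1 else 0
      rw [Finset.sum_congr rfl fun b _ => E01 b]
      simp
    · show ∑ b : Fin N, ∑ c, LME5.ψ N (1,b,c) * conj (LME5.ψ N (0,b,c))
        = 1 / ((2:ℕ):ℂ) * if (1 : Fin 2) = 0 then 1 else 0
      rw [Finset.sum_congr rfl fun b _ => E10 b]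
      simp
    · show ∑ b : Fin N, ∑ c, LME5.ψ N (1,b,c) * conj (LME5.ψ N (1,b,c))
        = 1 / ((2:ℕ):ℂ) * if (1 : Fin 2) = 1 then 1 else 0
      rw [Finset.sum_congr rfl fun b _ => E11 b, ← Complex.ofReal_sum, LME5.sumB N hN]
      norm_num
  · -- rho2
    ext b b'
    simp only [rho2, Matrix.of_apply, Matrix.smul_apply, Matrix.one_apply, smul_eq_mul]
    rw [Fin.sum_univ_two]
    simp only [LME5.psi0, LME5.psi1]
    rw [LME5.sum_c_mul, LME5.sum_c_mul]
    by_cases hb : b = b'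
    · subst hb
      rw [if_pos rfl, if_pos rfl, if_pos rfl, mul_one]
      simp only [Complex.conj_ofReal, ← Complex.ofReal_mul, LME5.u0_sq, LME5.u1_sq,
        ← Complex.ofReal_add]
      have hval : ((N:ℝ) - (b:ℕ)) / LME5.D N + (((b:ℕ):ℝ) + 1) / LME5.D N = 1 / (N:ℝ) := by
        unfold LME5.D
        field_simp
        ring
      rw [hval]
      push_cast
      ring
    · rw [if_neg (fun h => hb (Fin.castSucc_inj.mp h)), if_neg (fun h => hb (Fin.succ_inj.mp h)),
        if_neg hb]
      simp
  · -- rho3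
    ext c c'
    simp only [rho3, Matrix.of_apply, Matrix.smul_apply, Matrix.one_apply, smul_eq_mul]
    rw [Fin.sum_univ_two]
    simp only [LME5.psi0, LME5.psi1]
    by_cases hc : c = c'
    · subst hc
      rw [if_pos rfl, mul_one]
      have k0 : ∀ b : Fin N,
          (if c = Fin.castSucc b then ((LME5.u0 N b : ℝ) : ℂ) else 0) *
            conj (if c = Fin.castSucc b then ((LME5.u0 N b : ℝ) : ℂ) else 0)
          = if c = Fin.castSucc b then ((((N:ℝ) - (b:ℕ)) / LME5.D N : ℝ) : ℂ) else 0 := by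
        intro b
        by_cases h : c = Fin.castSucc b <;>
          simp [h, Complex.conj_ofReal, ← Complex.ofReal_mul, LME5.u0_sq]
      have k1 : ∀ b : Fin N,
          (if c = Fin.succ b then ((LME5.u1 N b : ℝ) : ℂ) else 0) *
            conj (if c = Fin.succ b then ((LME5.u1 N b : ℝ) : ℂ) else 0)
          = if c = Fin.succ b then (((((b:ℕ):ℝ) + 1) / LME5.D N : ℝ) : ℂ) else 0 := by
        intro b
        by_cases h : c = Fin.succ b <;>
          simp [h, Complex.conj_ofReal, ← Complex.ofReal_mul, LME5.u1_sq]
      rw [Finset.sum_congr rfl fun b _ => k0 b, Finset.sum_congr rfl fun b _ => k1 b,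
        LME5.sum_b_castSucc, LME5.sum_b_succ]
      have hcast : (1 / (((N:ℕ) + 1 : ℕ) : ℂ)) = (((1:ℝ) / ((N:ℝ) + 1) : ℝ) : ℂ) := by
        push_cast
        ring
      rw [hcast]
      have hcN : (c:ℕ) < N + 1 := c.isLt
      by_cases h1 : (c:ℕ) < N <;> by_cases h2 : (c:ℕ) ≠ 0
      · rw [dif_pos h1, dif_pos h2, ← Complex.ofReal_add]
        rw [Complex.ofReal_inj]
        simp only [Fin.val_mk]
        rw [Nat.cast_sub (by omega : 1 ≤ (c:ℕ))]
        unfold LME5.D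
        field_simp
        push_cast
        ring
      · rw [dif_pos h1, dif_neg h2]
        push_neg at h2
        rw [add_zero, Complex.ofReal_inj]
        simp only [Fin.val_mk, h2]
        unfold LME5.D
        field_simp
        simp
      · rw [dif_neg h1, dif_pos h2]
        have hcv : (c:ℕ) = N := by omega
        rw [zero_add, Complex.ofReal_inj]
        simp only [Fin.val_mk, hcv]
        rw [Nat.cast_sub (by omega : 1 ≤ N)]
        unfold LME5.D
        field_simp
        simp
      · omega
    · rw [if_neg hc, mul_zero]
      have z0 : ∀ b : Fin N,
          (if c = Fin.castSucc b then ((LME5.u0 N b : ℝ) : ℂ) else 0) *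
            conj (if c' = Fin.castSucc b then ((LME5.u0 N b : ℝ) : ℂ) else 0) = 0 := by
        intro b
        by_cases h : c = Fin.castSucc b
        · rw [if_pos h, if_neg (fun h' : c' = Fin.castSucc b => hc (h.trans h'.symm)),
            map_zero, mul_zero]
        · rw [if_neg h, zero_mul]
      have z1 : ∀ b : Fin N,
          (if c = Fin.succ b then ((LME5.u1 N b : ℝ) : ℂ) else 0) *
            conj (if c' = Fin.succ b then ((LME5.u1 N b : ℝ) : ℂ) else 0) = 0 := by
        intro b
        by_cases h : c = Fin.succ b
        · rw [if_pos h, if_neg (fun h' : c' = Fin.succ b => hc (h.trans h'.symm)),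
            map_zero, mul_zero]
        · rw [if_neg h, zero_mul]
      rw [Finset.sum_congr rfl fun b _ => z0 b, Finset.sum_congr rfl fun b _ => z1 b]
      simp

end
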